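/- Let g ≥ 1 be an odd integer and set a = (g+1)/2. Let x, y ∈ ℂ with x ≠ 0 and y² = x^{2g+1} + x. Then the point (u, v) := ((x² + 1)/x, y/x^a) satisfies v² = ∑_{k=0}^{⌊g/2⌋} (-1)^k · T(g, k) · u^{g-2k}, where T(g, k) = C(g-k, k) + C(g-k-1, k-1) is the integer (g/(g-k))·C(g-k, k). -/

import Mathlib

/-- The Lucas-coefficient triangle `T(g, k) = C(g-k, k) + C(g-k-1, k-1)` as an integer,
with the convention `C(m, -1) = 0`, so that `T(g, 0) = 1`. -/
def lucasT (g k : ℕ) : ℤ :=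
  (Nat.choose (g - k) k : ℤ) + if k = 0 then 0 else (Nat.choose (g - k - 1) (k - 1) : ℤ)

lemma lucasT_zero (g : ℕ) : lucasT g 0 = 1 := by simp [lucasT]

lemma lucasT_rec (g j : ℕ) (hkg : j + 1 ≤ g) :
    lucasT (g + 2) (j + 1) = lucasT (g + 1) (j + 1) + lucasT g j := by
  obtain ⟨d, rfl⟩ := Nat.exists_eq_add_of_le hkg
  have h1 : j + 1 + d + 2 - (j + 1) = d + 2 := by omega
  have h2 : j + 1 + d + 2 - (j + 1) - 1 = d + 1 := by omega
  have h3 : j + 1 + d + 1 - (j + 1) = d + 1 := by omega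
  have h4 : j + 1 + d + 1 - (j + 1) - 1 = d := by omega
  have h5 : j + 1 + d - j = d + 1 := by omega
  simp only [lucasT, h1, h2, h3, h4, h5, Nat.succ_ne_zero, if_false]
  rcases j with _ | i
  · simp [Nat.choose_succ_succ]; ring
  · have h6 : i + 1 + 1 + d - (i + 1) - 1 = d := by omega
    simp only [h6, Nat.succ_ne_zero, if_false, Nat.add_sub_cancel]
    have p1 : Nat.choose (d+2) (i+2) = Nat.choose (d+1) (i+1) + Nat.choose (d+1) (i+2) :=
      Nat.choose_succ_succ' (d+1) (i+1) ▸ by rw [Nat.choose_succ_succ]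
    have p2 : Nat.choose (d+1) (i+1) = Nat.choose d i + Nat.choose d (i+1) :=
      Nat.choose_succ_succ d i
    push_cast [p1, p2]
    ring

lemma lucasT_top_zero (m : ℕ) : lucasT (2 * m + 3) (m + 2) = 0 := by
  have h1 : 2 * m + 3 - (m + 2) = m + 1 := by omega
  have h2 : 2 * m + 3 - (m + 2) - 1 = m := by omega
  simp only [lucasT, h1, h2, Nat.succ_ne_zero, if_false, Nat.add_sub_cancel]
  rw [Nat.choose_eq_zero_of_lt (by omega), Nat.choose_eq_zero_of_lt (by omega)]
  simp

noncomputable def S (x : ℂ) (g : ℕ) : ℂ :=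
  ∑ k ∈ Finset.range (g / 2 + 1),
    ((-1 : ℤ) ^ k * lucasT g k : ℤ) * ((x ^ 2 + 1) / x) ^ (g - 2 * k)

lemma shift_helper (n : ℕ) (A B C : ℕ → ℂ) (h0 : A 0 = B 0)
    (h : ∀ j < n, A (j + 1) + C j = B (j + 1)) :
    ∑ k ∈ Finset.range (n + 1), A k
      = ∑ k ∈ Finset.range (n + 1), B k - ∑ k ∈ Finset.range n, C k := by
  rw [Finset.sum_range_succ' A n, Finset.sum_range_succ' B n, eq_sub_iff_add_eq]
  have hs : ∑ j ∈ Finset.range n, (A (j + 1) + C j) = ∑ j ∈ Finset.range n, B (j + 1) :=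
    Finset.sum_congr rfl fun j hj => h j (Finset.mem_range.mp hj)
  rw [Finset.sum_add_distrib] at hs
  linear_combination hs + h0

lemma S_rec (x : ℂ) (g : ℕ) (hg : 1 ≤ g) :
    S x (g + 2) = ((x ^ 2 + 1) / x) * S x (g + 1) - S x g := by
  set u := (x ^ 2 + 1) / x with hu
  rcases Nat.even_or_odd g with hpar | hpar
  · -- g even, g = 2m+2
    obtain ⟨m, rfl⟩ : ∃ m, g = 2 * m + 2 := ⟨(g - 2) / 2, by
      obtain ⟨r, hr⟩ := hpar; omega⟩
    simp only [S, Finset.mul_sum]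
    rw [show (2 * m + 2 + 2) / 2 + 1 = m + 2 + 1 by omega,
        show (2 * m + 2 + 1) / 2 + 1 = m + 2 by omega,
        show (2 * m + 2) / 2 + 1 = m + 2 by omega]
    have hB : (∑ k ∈ Finset.range (m + 2 + 1),
          u * (((-1 : ℤ) ^ k * lucasT (2 * m + 2 + 1) k : ℤ) * u ^ (2 * m + 2 + 1 - 2 * k)))
        = ∑ k ∈ Finset.range (m + 2),
          u * (((-1 : ℤ) ^ k * lucasT (2 * m + 2 + 1) k : ℤ) * u ^ (2 * m + 2 + 1 - 2 * k)) := by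
      rw [Finset.sum_range_succ, show 2 * m + 2 + 1 = 2 * m + 3 by ring, lucasT_top_zero m]
      simp
    rw [← hB]
    refine shift_helper (m + 2) _ _ _ ?_ ?_
    · simp only [pow_zero, one_mul, lucasT_zero, Nat.mul_zero, Nat.sub_zero]
      push_cast
      ring
    · intro j hj
      by_cases hjm : j = m + 1
      · subst hjm
        rw [show 2 * m + 2 + 2 - 2 * (m + 1 + 1) = 0 by omega,
            show 2 * m + 2 - 2 * (m + 1) = 0 by omega,
            show 2 * m + 2 + 1 - 2 * (m + 1 + 1) = 0 by omega,
            show 2 * m + 2 + 2 = (2 * m + 2) + 2 by ring,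
            lucasT_rec (2 * m + 2) (m + 1) (by omega),
            show 2 * m + 2 + 1 = 2 * m + 3 by ring, lucasT_top_zero m]
        push_cast
        ring
      · have hjl : j ≤ m := by omega
        rw [show 2 * m + 2 + 2 - 2 * (j + 1) = 2 * (m - j) + 2 by omega,
            show 2 * m + 2 - 2 * j = 2 * (m - j) + 2 by omega,
            show 2 * m + 2 + 1 - 2 * (j + 1) = 2 * (m - j) + 1 by omega,
            show 2 * m + 2 + 2 = (2 * m + 2) + 2 by ring,
            lucasT_rec (2 * m + 2) j (by omega)]
        push_cast
        ring
  · -- g odd, g = 2m+1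
    obtain ⟨m, rfl⟩ : ∃ m, g = 2 * m + 1 := ⟨(g - 1) / 2, by
      obtain ⟨r, hr⟩ := hpar; omega⟩
    simp only [S, Finset.mul_sum]
    rw [show (2 * m + 1 + 2) / 2 + 1 = m + 1 + 1 by omega,
        show (2 * m + 1 + 1) / 2 + 1 = m + 1 + 1 by omega,
        show (2 * m + 1) / 2 + 1 = m + 1 by omega]
    refine shift_helper (m + 1) _ _ _ ?_ ?_
    · simp only [pow_zero, one_mul, lucasT_zero, Nat.mul_zero, Nat.sub_zero]
      push_cast
      ring
    · intro j hj
      have hjl : j ≤ m := by omega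
      rw [show 2 * m + 1 + 2 - 2 * (j + 1) = 2 * (m - j) + 1 by omega,
          show 2 * m + 1 - 2 * j = 2 * (m - j) + 1 by omega,
          show 2 * m + 1 + 1 - 2 * (j + 1) = 2 * (m - j) by omega,
          show 2 * m + 1 + 2 = (2 * m + 1) + 2 by ring,
          lucasT_rec (2 * m + 1) j (by omega)]
      push_cast
      ring

lemma S_one (x : ℂ) (hx : x ≠ 0) : S x 1 = x ^ 1 + x⁻¹ ^ 1 := by
  simp [S, lucasT]
  field_simp

lemma S_two (x : ℂ) (hx : x ≠ 0) : S x 2 = x ^ 2 + x⁻¹ ^ 2 := by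
  rw [S]
  rw [show (2 : ℕ) / 2 + 1 = 2 by norm_num]
  rw [Finset.sum_range_succ, Finset.sum_range_succ, Finset.sum_range_zero]
  norm_num [lucasT]
  field_simp
  ring

lemma S_eq (x : ℂ) (hx : x ≠ 0) (n : ℕ) : S x (n + 1) = x ^ (n + 1) + x⁻¹ ^ (n + 1) := by
  induction n using Nat.strong_induction_on with
  | _ n ih =>
    match n with
    | 0 => exact S_one x hx
    | 1 => exact S_two x hx
    | (m + 2) =>
      rw [show m + 2 + 1 = (m + 1) + 2 by ring, S_rec x (m + 1) (by omega),
          ih m (by omega), ih (m + 1) (by omega)]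
      linear_combination (x ^ 2 * x ^ (m + 1) + x⁻¹ ^ (m + 1) * (x * x⁻¹ + 1) + x ^ (m + 1)) * mul_inv_cancel₀ hx

/-- For odd `g ≥ 1` and `a = (g+1)/2`, the map `φ(x, y) = ((x²+1)/x, y/x^a)` sends affine
points (with `x ≠ 0`) of the hyperelliptic curve `y² = x^{2g+1} + x` to affine points of
the curve `y² = ∑_{k=0}^{⌊g/2⌋} (-1)^k T(g, k) x^{g-2k}`. -/
theorem hyperelliptic_morphism (g : ℕ) (hg : 1 ≤ g) (hodd : Odd g)
    (x y : ℂ) (hx : x ≠ 0) (hC : y ^ 2 = x ^ (2 * g + 1) + x) :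
    (y / x ^ ((g + 1) / 2)) ^ 2 =
      ∑ k ∈ Finset.range (g / 2 + 1),
        ((-1 : ℤ) ^ k * lucasT g k : ℤ) * ((x ^ 2 + 1) / x) ^ (g - 2 * k) := by
  have hg2 : g % 2 = 1 := Nat.odd_iff.mp hodd
  obtain ⟨t, rfl⟩ : ∃ t, g = 2 * t + 1 := ⟨g / 2, by omega⟩
  have hS : S x (2 * t + 1) = x ^ (2 * t + 1) + x⁻¹ ^ (2 * t + 1) := S_eq x hx (2 * t)
  calc (y / x ^ ((2 * t + 1 + 1) / 2)) ^ 2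
      = x ^ (2 * t + 1) + x⁻¹ ^ (2 * t + 1) := by
        rw [show (2 * t + 1 + 1) / 2 = t + 1 by omega, div_pow, hC]
        rw [show 2 * (2 * t + 1) + 1 = 4 * t + 3 by ring]
        field_simp
        have h1 : x * x⁻¹ = 1 := mul_inv_cancel₀ hx
        have h2 : (x * x⁻¹) ^ (2 * t) = 1 := by rw [h1, one_pow]
        linear_combination (-x * (x * x⁻¹) ^ (2 * t)) * h1 - x * h2
    _ = S x (2 * t + 1) := hS.symm
    _ = _ := by rw [S]
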